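/- For the standard simplex categories, cat(N([k]) × N([l])) ≅ [k] × [l], naturally in [k] and [l], where [n] denotes the linear order category 0 → 1 → ⋯ → n. -/

import Mathlib

open CategoryTheory CategoryTheory.Limits Opposite SimplexCategory Simplicial

instance : nerveFunctor.{0,0}.Faithful := nerveFunctor.faithful

instance : nerveFunctor.{0,0}.Full := nerveFunctor.full

def N' : Cat.{0,0} ⥤ SSet.{0} :=
  yoneda ⋙ (Functor.whiskeringLeft SimplexCategoryᵒᵖ Cat.{0,0}ᵒᵖ (Type 0)).obj SimplexCategory.toCat.op

instance : PreservesLimits N' := by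
  have h : PreservesLimits (yoneda ⋙ (Functor.whiskeringLeft SimplexCategoryᵒᵖ Cat.{0,0}ᵒᵖ
      (Type 0)).obj SimplexCategory.toCat.op) := comp_preservesLimits _ _
  exact h

def nerveIsoN' : nerveFunctor.{0,0} ≅ N' :=
  NatIso.ofComponents (fun C => NatIso.ofComponents
    (fun n => (Functor.equivCatHom _ _).toIso) (fun f => rfl)) (fun f => rfl)

instance : PreservesLimits nerveFunctor.{0,0} :=
  preservesLimits_of_natIso nerveIsoN'.symm

/-- For the standard simplices, `cat (N[k] × N[l]) ≅ [k] × [l]`, naturally in `[k]` and `[l]`,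
where `cat` is any left adjoint of the nerve functor, `[n]` denotes the linear order category
`0 → 1 → ⋯ → n` (i.e. `SimplexCategory.toCat.obj [n]`), and `N[k] = Δ[k]` is the nerve of
`[k]`, the standard `k`-simplex. -/
theorem categorification_of_product_of_standard_simplices
    (catF : SSet.{0} ⥤ Cat.{0, 0}) (adj : catF ⊣ nerveFunctor.{0, 0}) :
    ∃ e : ∀ k l : SimplexCategory,
        catF.obj
            (nerveFunctor.obj (SimplexCategory.toCat.obj k) ⨯
              nerveFunctor.obj (SimplexCategory.toCat.obj l)) ≅
          (SimplexCategory.toCat.obj k) ⨯ (SimplexCategory.toCat.obj l),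
      ∀ (k k' l l' : SimplexCategory) (f : k ⟶ k') (g : l ⟶ l'),
        catF.map
            (Limits.prod.map (nerveFunctor.map (SimplexCategory.toCat.map f))
              (nerveFunctor.map (SimplexCategory.toCat.map g))) ≫ (e k' l').hom =
          (e k l).hom ≫
            Limits.prod.map (SimplexCategory.toCat.map f) (SimplexCategory.toCat.map g) := by
  refine ⟨fun k l => catF.mapIso (asIso (prodComparison nerveFunctor
      (SimplexCategory.toCat.obj k) (SimplexCategory.toCat.obj l))).symm ≪≫
      asIso (adj.counit.app _), ?_⟩
  intro k k' l l' f g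
  have hnat : Limits.prod.map (nerveFunctor.map (SimplexCategory.toCat.map f))
        (nerveFunctor.map (SimplexCategory.toCat.map g)) ≫
        inv (prodComparison nerveFunctor _ _)
      = inv (prodComparison nerveFunctor _ _) ≫
        nerveFunctor.map (Limits.prod.map (SimplexCategory.toCat.map f)
          (SimplexCategory.toCat.map g)) :=
    (prodComparison_inv_natural nerveFunctor _ _).symm
  simp only [Iso.trans_hom, Functor.mapIso_hom, Iso.symm_hom, asIso_hom, asIso_inv]
  rw [← Category.assoc, ← catF.map_comp, hnat, catF.map_comp, Category.assoc,
    Category.assoc]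
  congr 1
  exact adj.counit.naturality _
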